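/- For all integers q ≥ 2 and n, N ≥ 1, we have f_{q,q−1}(N) ≤ n if and only if F_{q,q−1}(n) ≥ N. -/

import Mathlib

/-- A monotone path of length `ℓ` (number of vertices) in the `q`-edge-colored complete
graph on `[N]` given by `χ`, all of whose edge colors lie in `S`. -/
def HasMonoPath (q N : ℕ) (χ : Fin N → Fin N → Fin q) (S : Finset (Fin q)) (ℓ : ℕ) : Prop :=
  ∃ v : Fin ℓ → Fin N, StrictMono v ∧
    ∀ i j : Fin ℓ, (i : ℕ) + 1 = (j : ℕ) → χ (v i) (v j) ∈ S

/-- The maximum length of a monotone path using at most `r` colors in the coloring `χ`. -/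
noncomputable def maxMonoLen (q r N : ℕ) (χ : Fin N → Fin N → Fin q) : ℕ :=
  sSup {ℓ : ℕ | ∃ S : Finset (Fin q), S.card ≤ r ∧ HasMonoPath q N χ S ℓ}

/-- `fqr q r N` : the minimum over `q`-edge-colorings of the complete graph on `[N]` of the
maximum length of a monotone path using at most `r` colors. -/
noncomputable def fqr (q r N : ℕ) : ℕ :=
  sInf {L : ℕ | ∃ χ : Fin N → Fin N → Fin q, L = maxMonoLen q r N χ}

/-- `x <_r y` : there are at least `r` coordinates `i` with `x i < y i`. -/
def rLess (q r : ℕ) (x y : Fin q → ℕ) : Prop :=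
  r ≤ (Finset.univ.filter (fun i => x i < y i)).card

/-- `Fqr q r n` : the maximum length `N` of an `r`-increasing sequence of vectors in `[n]^q`. -/
noncomputable def Fqr (q r n : ℕ) : ℕ :=
  sSup {N : ℕ | ∃ x : Fin N → Fin q → ℕ,
    (∀ a i, x a i ∈ Finset.Icc 1 n) ∧
    ∀ a b : Fin N, a < b → rLess q r (x a) (x b)}

/-- `Gqr q r n` : the maximum size of an `r`-comparable subset of `[n]^q`. -/
noncomputable def Gqr (q r n : ℕ) : ℕ :=
  sSup {N : ℕ | ∃ S : Finset (Fin q → ℕ), S.card = N ∧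
    (∀ x ∈ S, ∀ i, x i ∈ Finset.Icc 1 n) ∧
    ∀ x ∈ S, ∀ y ∈ S, x ≠ y → rLess q r x y ∨ rLess q r y x}

lemma monoPath_le {q N ℓ : ℕ} {χ : Fin N → Fin N → Fin q} {S : Finset (Fin q)}
    (h : HasMonoPath q N χ S ℓ) : ℓ ≤ N := by
  obtain ⟨v, hv, -⟩ := h
  simpa using Fintype.card_le_of_injective v hv.injective

lemma maxMonoLen_bdd (q r N : ℕ) (χ : Fin N → Fin N → Fin q) :
    BddAbove {ℓ : ℕ | ∃ S : Finset (Fin q), S.card ≤ r ∧ HasMonoPath q N χ S ℓ} :=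
  ⟨N, fun _ ⟨_, _, h⟩ => monoPath_le h⟩

lemma le_maxMonoLen {q r N ℓ : ℕ} {χ : Fin N → Fin N → Fin q} {S : Finset (Fin q)}
    (hS : S.card ≤ r) (h : HasMonoPath q N χ S ℓ) : ℓ ≤ maxMonoLen q r N χ :=
  le_csSup (maxMonoLen_bdd q r N χ) ⟨S, hS, h⟩

lemma Fqr_bdd (q n : ℕ) (hq : 2 ≤ q) :
    BddAbove {N : ℕ | ∃ x : Fin N → Fin q → ℕ,
      (∀ a i, x a i ∈ Finset.Icc 1 n) ∧
      ∀ a b : Fin N, a < b → rLess q (q - 1) (x a) (x b)} := by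
  refine ⟨n ^ q, ?_⟩
  rintro M ⟨x, hmem, hinc⟩
  have hkey : ∀ a b : Fin M, a < b → x a ≠ x b := by
    intro a b hab heq
    have h1 := hinc a b hab
    rw [rLess] at h1
    have h2 : (Finset.univ.filter (fun i => x a i < x b i)).Nonempty := by
      rw [← Finset.card_pos]; omega
    obtain ⟨i, hi⟩ := h2
    rw [Finset.mem_filter] at hi
    rw [heq] at hi
    exact lt_irrefl _ hi.2
  have hinj : Function.Injective
      (fun a : Fin M => fun i : Fin q => (⟨x a i, hmem a i⟩ : Finset.Icc 1 n)) := by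
    intro a b hab
    by_contra hne
    have hxab : x a = x b := by
      funext i
      have := congrFun hab i
      exact Subtype.ext_iff.mp this
    rcases Ne.lt_or_gt hne with h | h
    · exact hkey a b h hxab
    · exact hkey b a h hxab.symm
  calc M = Fintype.card (Fin M) := (Fintype.card_fin M).symm
    _ ≤ Fintype.card (Fin q → Finset.Icc 1 n) := Fintype.card_le_of_injective _ hinj
    _ = n ^ q := by
        simp [Fintype.card_fun, Fintype.card_coe, Nat.card_Icc]


/-- For all integers `q ≥ 2` and `n, N ≥ 1`, `f_{q,q-1}(N) ≤ n` iff `F_{q,q-1}(n) ≥ N`. -/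
theorem stmt_7 (q n N : ℕ) (hq : 2 ≤ q) (hn : 1 ≤ n) (hN : 1 ≤ N) :
    fqr q (q - 1) N ≤ n ↔ N ≤ Fqr q (q - 1) n := by
  classical
  constructor
  · -- fqr ≤ n → N ≤ Fqr
    intro hf
    have hBne : {L : ℕ | ∃ χ : Fin N → Fin N → Fin q, L = maxMonoLen q (q-1) N χ}.Nonempty :=
      ⟨_, fun _ _ => (⟨0, by omega⟩ : Fin q), rfl⟩
    obtain ⟨χ, hχ⟩ := Nat.sInf_mem hBne
    have hχn : maxMonoLen q (q - 1) N χ ≤ n := by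
      have h2 : fqr q (q - 1) N = maxMonoLen q (q - 1) N χ := hχ
      omega
    set P : Fin N → Fin q → Set ℕ := fun a i =>
      {ℓ | ∃ v : Fin (ℓ+1) → Fin N, StrictMono v ∧
        (∀ k l : Fin (ℓ+1), (k : ℕ) + 1 = (l : ℕ) → χ (v k) (v l) ≠ i) ∧
        v (Fin.last ℓ) = a} with hPdef
    have hP0 : ∀ a i, 0 ∈ P a i := by
      intro a i
      refine ⟨fun _ => a, ?_, ?_, rfl⟩
      · intro k l hkl
        have hk := k.isLt; have hl := l.isLt
        exact absurd (Fin.lt_def.mp hkl) (by omega)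
      · intro k l h
        have hk := k.isLt; have hl := l.isLt
        omega
    have hPbdd : ∀ a i, ∀ ℓ ∈ P a i, ℓ + 1 ≤ n := by
      intro a i ℓ hℓ
      obtain ⟨v, hv, hcol, -⟩ := hℓ
      have hpath : HasMonoPath q N χ (Finset.univ.erase i) (ℓ + 1) := by
        refine ⟨v, hv, ?_⟩
        intro k l h
        exact Finset.mem_erase.mpr ⟨hcol k l h, Finset.mem_univ _⟩
      have hcard : (Finset.univ.erase i).card ≤ q - 1 := by
        rw [Finset.card_erase_of_mem (Finset.mem_univ i), Finset.card_univ, Fintype.card_fin]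
      exact le_trans (le_maxMonoLen hcard hpath) hχn
    have hPbdd' : ∀ a i, BddAbove (P a i) := by
      intro a i
      exact ⟨n, fun ℓ hℓ => by have := hPbdd a i ℓ hℓ; omega⟩
    set x : Fin N → Fin q → ℕ := fun a i => sSup (P a i) + 1 with hxdef
    have hmemP : ∀ a i, sSup (P a i) ∈ P a i := fun a i =>
      Nat.sSup_mem ⟨0, hP0 a i⟩ (hPbdd' a i)
    have hx1 : ∀ a i, x a i ∈ Finset.Icc 1 n := by
      intro a i
      simp only [hxdef, Finset.mem_Icc]
      exact ⟨by omega, hPbdd a i _ (hmemP a i)⟩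
    have hstep : ∀ a b : Fin N, a < b → ∀ i : Fin q, i ≠ χ a b →
        sSup (P a i) < sSup (P b i) := by
      intro a b hab i hi
      obtain ⟨m, hmP, hmS⟩ : ∃ m, m ∈ P a i ∧ m = sSup (P a i) := ⟨_, hmemP a i, rfl⟩
      obtain ⟨v, hv, hcol, hlast⟩ := hmP
      have hvb : ∀ k : Fin (m+1), v k < b := by
        intro k
        calc v k ≤ v (Fin.last m) := hv.monotone (Fin.le_last k)
          _ = a := hlast
          _ < b := hab
      set w : Fin (m+2) → Fin N := Fin.snoc v b with hwdef
      have hwc : ∀ k : Fin (m+1), w k.castSucc = v k := by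
        intro k; rw [hwdef]; simp
      have hwl : w (Fin.last (m+1)) = b := by
        rw [hwdef]; simp
      have hmem2 : (m + 1) ∈ P b i := by
        refine ⟨w, ?_, ?_, hwl⟩
        · intro k l hkl
          by_cases hl : (l : ℕ) = m + 1
          · have hle : l = Fin.last (m+1) := Fin.ext hl
            have hkm : (k : ℕ) < m + 1 := by
              have := Fin.lt_def.mp hkl; omega
            have hke : k = Fin.castSucc ⟨(k : ℕ), hkm⟩ := Fin.ext rfl
            rw [hle, hke, hwl, hwc]
            exact hvb _
          · have hlm : (l : ℕ) < m + 1 := by have := l.isLt; omega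
            have hkm : (k : ℕ) < m + 1 := by have := Fin.lt_def.mp hkl; omega
            have hke : k = Fin.castSucc ⟨(k : ℕ), hkm⟩ := Fin.ext rfl
            have hle : l = Fin.castSucc ⟨(l : ℕ), hlm⟩ := Fin.ext rfl
            rw [hke, hle, hwc, hwc]
            exact hv (Fin.lt_def.mpr (Fin.lt_def.mp hkl))
        · intro k l hkl
          by_cases hl : (l : ℕ) = m + 1
          · have hle : l = Fin.last (m+1) := Fin.ext hl
            have hkm : (k : ℕ) < m + 1 := by omega
            have hkv : (k : ℕ) = m := by omega
            have hke : k = Fin.castSucc ⟨(k : ℕ), hkm⟩ := Fin.ext rfl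
            rw [hle, hke, hwl, hwc]
            have : (⟨(k : ℕ), hkm⟩ : Fin (m+1)) = Fin.last m := Fin.ext hkv
            rw [this, hlast]
            exact fun h => hi h.symm
          · have hlm : (l : ℕ) < m + 1 := by have := l.isLt; omega
            have hkm : (k : ℕ) < m + 1 := by omega
            have hke : k = Fin.castSucc ⟨(k : ℕ), hkm⟩ := Fin.ext rfl
            have hle : l = Fin.castSucc ⟨(l : ℕ), hlm⟩ := Fin.ext rfl
            rw [hke, hle, hwc, hwc]
            exact hcol _ _ hkl
      rw [← hmS]
      calc m < m + 1 := Nat.lt_succ_self m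
        _ ≤ sSup (P b i) := le_csSup (hPbdd' b i) hmem2
    have hx2 : ∀ a b : Fin N, a < b → rLess q (q - 1) (x a) (x b) := by
      intro a b hab
      rw [rLess]
      have hsub : Finset.univ.erase (χ a b) ⊆
          Finset.univ.filter (fun i => x a i < x b i) := by
        intro i hi
        rw [Finset.mem_erase] at hi
        rw [Finset.mem_filter]
        refine ⟨Finset.mem_univ _, ?_⟩
        have := hstep a b hab i hi.1
        simp only [hxdef]
        omega
      calc q - 1 = (Finset.univ.erase (χ a b)).card := by
            rw [Finset.card_erase_of_mem (Finset.mem_univ _), Finset.card_univ, Fintype.card_fin]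
        _ ≤ _ := Finset.card_le_card hsub
    exact le_csSup (Fqr_bdd q n hq) ⟨x, hx1, hx2⟩
  · -- N ≤ Fqr → fqr ≤ n
    intro hNF
    set A := {M : ℕ | ∃ x : Fin M → Fin q → ℕ,
      (∀ a i, x a i ∈ Finset.Icc 1 n) ∧
      ∀ a b : Fin M, a < b → rLess q (q - 1) (x a) (x b)} with hAdef
    have hA0 : (0 : ℕ) ∈ A := ⟨fun a => a.elim0, fun a => a.elim0, fun a => a.elim0⟩
    have hFmem : Fqr q (q - 1) n ∈ A := Nat.sSup_mem ⟨0, hA0⟩ (Fqr_bdd q n hq)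
    obtain ⟨x0, hx1, hx2⟩ := hFmem
    set y : Fin N → Fin q → ℕ := fun a => x0 (Fin.castLE hNF a) with hydef
    have hy1 : ∀ a i, y a i ∈ Finset.Icc 1 n := fun a i => hx1 _ i
    have hy2 : ∀ a b : Fin N, a < b → rLess q (q - 1) (y a) (y b) := by
      intro a b hab
      exact hx2 _ _ (Fin.lt_def.mpr (Fin.lt_def.mp hab))
    have key : ∀ a b : Fin N, a < b →
        (Finset.univ.filter (fun i => ¬ y a i < y b i)).card ≤ 1 := by
      intro a b hab
      have h1 := hy2 a b hab
      rw [rLess] at h1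
      have h2 := Finset.card_filter_add_card_filter_not
        (s := (Finset.univ : Finset (Fin q))) (fun i => y a i < y b i)
      rw [Finset.card_univ, Fintype.card_fin] at h2
      omega
    set c : Fin N → Fin N → Fin q := fun a b =>
      if h : (Finset.univ.filter (fun i => ¬ y a i < y b i)).Nonempty then h.choose
      else ⟨0, by omega⟩ with hcdef
    have hc : ∀ a b : Fin N, a < b → ∀ i : Fin q, i ≠ c a b → y a i < y b i := by
      intro a b hab i hi
      by_contra hcon
      have hiT : i ∈ Finset.univ.filter (fun j => ¬ y a j < y b j) := by
        rw [Finset.mem_filter]; exact ⟨Finset.mem_univ _, hcon⟩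
      have hne : (Finset.univ.filter (fun j => ¬ y a j < y b j)).Nonempty := ⟨i, hiT⟩
      have hcT : c a b ∈ Finset.univ.filter (fun j => ¬ y a j < y b j) := by
        rw [hcdef]; simp only [dif_pos hne]; exact hne.choose_spec
      exact hi (Finset.card_le_one.mp (key a b hab) i hiT (c a b) hcT)
    have hmax : maxMonoLen q (q - 1) N c ≤ n := by
      apply csSup_le'
      rintro ℓ ⟨S, hScard, v, hv, hcol⟩
      have hcompl : Sᶜ.Nonempty := by
        rw [← Finset.card_pos, Finset.card_compl, Fintype.card_fin]
        omega
      obtain ⟨j, hj⟩ := hcompl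
      rw [Finset.mem_compl] at hj
      match ℓ, v, hv, hcol with
      | 0, v, hv, hcol => exact Nat.zero_le n
      | (m+1), v, hv, hcol =>
        have hg : StrictMono (fun k : Fin (m+1) => y (v k) j) := by
          rw [Fin.strictMono_iff_lt_succ]
          intro k
          have hedge : c (v k.castSucc) (v k.succ) ∈ S :=
            hcol k.castSucc k.succ (by simp)
          have hjne : j ≠ c (v k.castSucc) (v k.succ) := by
            intro h; rw [h] at hj; exact hj hedge
          exact hc _ _ (hv (Fin.castSucc_lt_succ (i := k))) j hjne
        have hcard := Finset.card_le_card_of_injOn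
          (s := (Finset.univ : Finset (Fin (m+1)))) (t := Finset.Icc 1 n)
          (fun k : Fin (m+1) => y (v k) j)
          (fun k _ => hy1 (v k) j) hg.injective.injOn
        simpa [Nat.card_Icc] using hcard
    exact le_trans (Nat.sInf_le ⟨c, rfl⟩) hmax
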